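/- Let n ∈ ℕ, N = 2^n, let G be the n-fold Kronecker power over 𝔽₂ of the kernel [[1,0],[1,1]], and fix a bit position ℓ < n. For every row index j ∈ {0,…,N−1}, let W = |{c ∈ {0,…,N−1} : the ℓ-th binary digit of c is 0 and G[j,c] ≠ 0}| be the Hamming weight of row g_j restricted to the columns whose ℓ-th digit is 0. Then the total Hamming weight of g_j equals W if the ℓ-th binary digit of j is 0, and equals 2·W if the ℓ-th binary digit of j is 1. -/

import Mathlib

open Finset

/-- The polar kernel `G₂ = [[1,0],[1,1]]` over `𝔽₂`. -/
def polarKernel : Matrix (Fin 2) (Fin 2) (ZMod 2) := !![1, 0; 1, 1]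

/-- The `n`-fold Kronecker power of the polar kernel, an `N × N` matrix over `𝔽₂`
with `N = 2 ^ n`, rows and columns indexed by `0, …, N-1`. -/
def polarG : (n : ℕ) → Matrix (Fin (2 ^ n)) (Fin (2 ^ n)) (ZMod 2)
  | 0 => 1
  | n + 1 =>
    Matrix.reindex (finCongr (by ring)) (finCongr (by ring))
      (Matrix.reindex finProdFinEquiv finProdFinEquiv
        (Matrix.kroneckerMap (· * ·) polarKernel (polarG n)))

/-- Row `g_t` of the polar matrix, as a vector in `𝔽₂^N`. -/
def row (n : ℕ) (t : Fin (2 ^ n)) : Fin (2 ^ n) → ZMod 2 := fun c => polarG n t c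

/-- Hamming weight `i₁(v)`: the number of nonzero coordinates of `v`. -/
def hammingWeight {N : ℕ} (v : Fin N → ZMod 2) : ℕ :=
  (Finset.univ.filter fun c => v c ≠ 0).card

/-- `popcount j`: the number of ones in the binary representation of `j`. -/
def popcount (j : ℕ) : ℕ := (Nat.bits j).count true

/-- the total Hamming weight of row `g_j` equals `W` if the `ℓ`-th digit of
`j` is `0` and `2·W` if it is `1`, where `W` is the weight of the restriction of `g_j`
to the columns whose `ℓ`-th digit is `0`. -/
lemma polarKernel_ne_zero (a b : Fin 2) : polarKernel a b ≠ 0 ↔ ((b : ℕ) = 1 → (a : ℕ) = 1) := by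
  fin_cases a <;> fin_cases b <;> simp [polarKernel]

lemma div_pow_lt_two {n : ℕ} (j : Fin (2^(n+1))) : (j:ℕ)/2^n < 2 :=
  Nat.div_lt_of_lt_mul (calc (j:ℕ) < 2^(n+1) := j.isLt
    _ = 2^n * 2 := pow_succ 2 n)

lemma testBit_eq_one_div {n : ℕ} (j : Fin (2^(n+1))) :
    (j:ℕ).testBit n = true ↔ (j:ℕ)/2^n = 1 := by
  have h := div_pow_lt_two j
  rw [Nat.testBit_eq_decide_div_mod_eq, decide_eq_true_eq]
  generalize (j:ℕ) / 2^n = x at h ⊢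
  omega

lemma polarG_succ (n : ℕ) (j c : Fin (2^(n+1))) :
    polarG (n+1) j c =
      polarKernel ⟨(j:ℕ)/2^n, div_pow_lt_two j⟩ ⟨(c:ℕ)/2^n, div_pow_lt_two c⟩ *
      polarG n ⟨(j:ℕ)%2^n, Nat.mod_lt _ (Nat.pow_pos (by norm_num))⟩
        ⟨(c:ℕ)%2^n, Nat.mod_lt _ (Nat.pow_pos (by norm_num))⟩ := by
  simp [polarG, Matrix.kroneckerMap, finProdFinEquiv, Fin.divNat, Fin.modNat]

lemma polarG_ne_zero_iff : ∀ (n : ℕ) (j c : Fin (2^n)),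
    polarG n j c ≠ 0 ↔ ∀ i, (c:ℕ).testBit i = true → (j:ℕ).testBit i = true
  | 0, j, c => by
      have hc : (c:ℕ) = 0 := by omega
      have : j = c := by apply Fin.ext; omega
      subst this
      simp [polarG, Matrix.one_apply, hc]
  | n+1, j, c => by
      rw [polarG_succ, mul_ne_zero_iff, polarKernel_ne_zero, polarG_ne_zero_iff n]
      simp only []
      constructor
      · rintro ⟨h1, h2⟩ i hci
        rcases lt_trichotomy i n with hi | rfl | hi
        · have := h2 i (by rw [Nat.testBit_mod_two_pow]; simp [hi, hci])
          rw [Nat.testBit_mod_two_pow, Bool.and_eq_true] at this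
          exact this.2
        · exact (testBit_eq_one_div j).mpr (h1 ((testBit_eq_one_div c).mp hci))
        · exfalso
          have : (c:ℕ).testBit i = false :=
            Nat.testBit_lt_two_pow (lt_of_lt_of_le c.isLt (Nat.pow_le_pow_right (by norm_num) hi))
          rw [this] at hci; exact Bool.false_ne_true hci
      · intro h
        refine ⟨fun hc1 => ?_, fun i hci => ?_⟩
        · exact (testBit_eq_one_div j).mp (h n ((testBit_eq_one_div c).mpr hc1))
        · rw [Nat.testBit_mod_two_pow, Bool.and_eq_true, decide_eq_true_eq] at hci
          rw [Nat.testBit_mod_two_pow, Bool.and_eq_true, decide_eq_true_eq]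
          exact ⟨hci.1, h i hci.2⟩

theorem hamming_weight_row_split (n ℓ : ℕ) (hℓ : ℓ < n) (j : Fin (2 ^ n)) :
    hammingWeight (row n j) =
      if (j : ℕ).testBit ℓ then
        2 * ((Finset.univ.filter fun c : Fin (2 ^ n) =>
          (c : ℕ).testBit ℓ = false ∧ row n j c ≠ 0).card)
      else
        (Finset.univ.filter fun c : Fin (2 ^ n) =>
          (c : ℕ).testBit ℓ = false ∧ row n j c ≠ 0).card := by
  classical
  have key : ∀ c : Fin (2^n), row n j c ≠ 0 ↔
      ∀ i, (c:ℕ).testBit i = true → (j:ℕ).testBit i = true := fun c => polarG_ne_zero_iff n j c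
  by_cases hj : (j:ℕ).testBit ℓ
  · rw [if_pos hj]
    have hsplit :
        ((Finset.univ.filter fun c : Fin (2^n) => (c:ℕ).testBit ℓ = false ∧ row n j c ≠ 0).card)
        + ((Finset.univ.filter fun c : Fin (2^n) => ¬((c:ℕ).testBit ℓ = false) ∧ row n j c ≠ 0).card)
        = hammingWeight (row n j) := by
      unfold hammingWeight
      rw [show (Finset.univ.filter fun c : Fin (2^n) => (c:ℕ).testBit ℓ = false ∧ row n j c ≠ 0)
          = (Finset.univ.filter fun c => row n j c ≠ 0).filter (fun c : Fin (2^n) => (c:ℕ).testBit ℓ = false) by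
          rw [Finset.filter_filter]; congr 1; ext c; tauto]
      rw [show (Finset.univ.filter fun c : Fin (2^n) => ¬((c:ℕ).testBit ℓ = false) ∧ row n j c ≠ 0)
          = (Finset.univ.filter fun c => row n j c ≠ 0).filter (fun c : Fin (2^n) => ¬((c:ℕ).testBit ℓ = false)) by
          rw [Finset.filter_filter]; congr 1; ext c; tauto]
      exact Finset.card_filter_add_card_filter_not _
    have hpow : 2^ℓ < 2^n := Nat.pow_lt_pow_right (by norm_num) hℓ
    set flip : Fin (2^n) → Fin (2^n) :=
      fun c => ⟨(c:ℕ) ^^^ 2^ℓ, Nat.xor_lt_two_pow c.isLt hpow⟩ with hflip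
    have hbit : ∀ (c : Fin (2^n)) i, ((flip c : Fin (2^n)) : ℕ).testBit i
        = ((c:ℕ).testBit i).xor (decide (ℓ = i)) := by
      intro c i; simp [hflip, Nat.testBit_xor, Nat.testBit_two_pow]
    have hrow : ∀ c : Fin (2^n), row n j c ≠ 0 → row n j (flip c) ≠ 0 := by
      intro c hc
      rw [key] at hc ⊢
      intro i hi
      rw [hbit] at hi
      by_cases hiℓ : ℓ = i
      · exact hiℓ ▸ hj
      · apply hc; simpa [hiℓ] using hi
    have hinv : ∀ c : Fin (2^n), flip (flip c) = c := by
      intro c; apply Fin.ext; simp [hflip, Nat.xor_assoc]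
    have hcard : (Finset.univ.filter fun c : Fin (2^n) => ¬((c:ℕ).testBit ℓ = false) ∧ row n j c ≠ 0).card
        = (Finset.univ.filter fun c : Fin (2^n) => (c:ℕ).testBit ℓ = false ∧ row n j c ≠ 0).card := by
      apply Finset.card_nbij' flip flip
      · intro c hc
        simp only [Finset.mem_coe, Finset.mem_filter, Finset.mem_univ, true_and] at hc ⊢
        refine ⟨?_, hrow c hc.2⟩
        rw [hbit]; simp only [decide_eq_true_eq]
        have : (c:ℕ).testBit ℓ = true := by
          rcases Bool.eq_false_or_eq_true ((c:ℕ).testBit ℓ) with h | h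
          · exact h
          · exact absurd h hc.1
        simp [this]
      · intro c hc
        simp only [Finset.mem_coe, Finset.mem_filter, Finset.mem_univ, true_and] at hc ⊢
        refine ⟨?_, hrow c hc.2⟩
        rw [hbit, hc.1]; simp
      · intro c _; exact hinv c
      · intro c _; exact hinv c
    omega
  · rw [if_neg hj]
    unfold hammingWeight
    congr 1
    apply Finset.filter_congr
    intro c _
    simp only [ne_eq, eq_iff_iff]
    constructor
    · intro hc
      refine ⟨?_, hc⟩
      rcases Bool.eq_false_or_eq_true ((c:ℕ).testBit ℓ) with h | h
      · exact absurd ((key c).mp hc ℓ h) hj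
      · exact h
    · exact fun h => h.2
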